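/- For a finite metric space (X,d) with diameter D and p ≥ 1, the map (r,s) ↦ W_p^p(r,s) is Lipschitz on the product of probability simplices: |W_p^p(r,s) − W_p^p(r',s')| ≤ p·D^p·(‖r − r'‖₁ + ‖s − s'‖₁). -/
import Mathlib


open Finset

def couplings {X : Type*} [Fintype X] (r s : X → ℝ) : Set (X → X → ℝ) :=
  {w | (∀ x x', 0 ≤ w x x') ∧ (∀ x, ∑ x', w x x' = r x) ∧ (∀ x', ∑ x, w x x' = s x')}

noncomputable def Wpp {X : Type*} [Fintype X] (d : X → X → ℝ) (p : ℝ) (r s : X → ℝ) : ℝ :=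
  sInf ((fun w => ∑ x, ∑ x', d x x' ^ p * w x x') '' couplings r s)

section Aux

variable {X : Type*} [Fintype X]

/-- The product coupling belongs to `couplings r s`. -/
lemma prod_mem_couplings (r s : X → ℝ) (hr0 : ∀ x, 0 ≤ r x)
    (hs0 : ∀ x, 0 ≤ s x) (hr1 : ∑ x, r x = 1) (hs1 : ∑ x, s x = 1) :
    (fun x x' => r x * s x') ∈ couplings r s := by
  refine ⟨fun x x' => mul_nonneg (hr0 x) (hs0 x'), fun x => ?_, fun x' => ?_⟩
  · rw [← Finset.mul_sum, hs1, mul_one]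
  · rw [← Finset.sum_mul, hr1, one_mul]

lemma cost_nonneg (d : X → X → ℝ) (p : ℝ) (hd : ∀ x x', 0 ≤ d x x' ^ p)
    (w : X → X → ℝ) (hw : ∀ x x', 0 ≤ w x x') :
    0 ≤ ∑ x, ∑ x', d x x' ^ p * w x x' :=
  Finset.sum_nonneg fun x _ => Finset.sum_nonneg fun x' _ =>
    mul_nonneg (hd x x') (hw x x')

lemma bddBelow_costs (d : X → X → ℝ) (p : ℝ) (hd : ∀ x x', 0 ≤ d x x' ^ p)
    (r s : X → ℝ) :
    BddBelow ((fun w => ∑ x, ∑ x', d x x' ^ p * w x x') '' couplings r s) := by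
  refine ⟨0, fun y hy => ?_⟩
  obtain ⟨w, hw, rfl⟩ := hy
  exact cost_nonneg d p hd w hw.1

/-- Key construction: adjust the first marginal of a coupling. -/
lemma exists_coupling_row (d : X → X → ℝ) (p D : ℝ)
    (hdp0 : ∀ x x', 0 ≤ d x x' ^ p) (hdD : ∀ x x', d x x' ^ p ≤ D ^ p)
    (hDp0 : 0 ≤ D ^ p)
    (r r' : X → ℝ) (hr0 : ∀ x, 0 ≤ r x) (hr1 : ∑ x, r x = 1)
    (hr'0 : ∀ x, 0 ≤ r' x) (hr'1 : ∑ x, r' x = 1)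
    (s : X → ℝ) (w : X → X → ℝ) (hw : w ∈ couplings r' s) :
    ∃ w' ∈ couplings r s,
      ∑ x, ∑ x', d x x' ^ p * w' x x' ≤
        ∑ x, ∑ x', d x x' ^ p * w x x' + D ^ p * ∑ x, |r x - r' x| := by
  obtain ⟨hw0, hwr, hws⟩ := hw
  set m : X → ℝ := fun x => min (r x) (r' x) with hm_def
  have hm0 : ∀ x, 0 ≤ m x := fun x => le_min (hr0 x) (hr'0 x)
  have hmr : ∀ x, m x ≤ r x := fun x => min_le_left _ _
  have hmr' : ∀ x, m x ≤ r' x := fun x => min_le_right _ _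
  set δ : ℝ := ∑ x, (r x - m x) with hδ_def
  have hδ0 : 0 ≤ δ := Finset.sum_nonneg fun x _ => sub_nonneg.2 (hmr x)
  have habs_nonneg : 0 ≤ ∑ x, |r x - r' x| :=
    Finset.sum_nonneg fun x _ => abs_nonneg _
  have hδ_eq : δ = 1 - ∑ x, m x := by
    rw [hδ_def, Finset.sum_sub_distrib, hr1]
  have hδle : δ ≤ ∑ x, |r x - r' x| := by
    rw [hδ_def]
    apply Finset.sum_le_sum
    intro x _
    rcases le_total (r x) (r' x) with h | h
    · simp [hm_def, min_eq_left h]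
    · simp only [hm_def, min_eq_right h]
      exact le_abs_self _
  by_cases hδz : δ = 0
  · -- then r = r'
    have h1 : ∀ x ∈ Finset.univ, r x - m x = 0 := by
      apply (Finset.sum_eq_zero_iff_of_nonneg (fun x _ => sub_nonneg.2 (hmr x))).1
      rw [← hδ_def]; exact hδz
    have hsum_m : ∑ x, m x = 1 := by rw [hδ_eq] at hδz; linarith
    have h2 : ∑ x, (r' x - m x) = 0 := by
      rw [Finset.sum_sub_distrib, hr'1, hsum_m]; ring
    have h2' : ∀ x ∈ Finset.univ, r' x - m x = 0 :=
      (Finset.sum_eq_zero_iff_of_nonneg (fun x _ => sub_nonneg.2 (hmr' x))).1 h2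
    have hrr' : r = r' := by
      funext x
      have ha := h1 x (Finset.mem_univ x)
      have hb := h2' x (Finset.mem_univ x)
      linarith
    refine ⟨w, ?_, ?_⟩
    · rw [hrr']; exact ⟨hw0, hwr, hws⟩
    · exact le_add_of_nonneg_right (mul_nonneg hDp0 habs_nonneg)
  · have hδpos : 0 < δ := lt_of_le_of_ne hδ0 (Ne.symm hδz)
    set q : X → ℝ := fun x => if r' x = 0 then 0 else m x / r' x with hq_def
    have hq0 : ∀ x, 0 ≤ q x := by
      intro x
      rw [hq_def]
      dsimp only
      split_ifs
      · exact le_refl 0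
      · exact div_nonneg (hm0 x) (hr'0 x)
    have hq1 : ∀ x, q x ≤ 1 := by
      intro x
      rw [hq_def]
      dsimp only
      split_ifs with h
      · exact zero_le_one
      · exact div_le_one_of_le₀ (hmr' x) (hr'0 x)
    have hqr' : ∀ x, q x * r' x = m x := by
      intro x
      rw [hq_def]
      dsimp only
      split_ifs with h
      · rw [h, mul_zero]
        have : m x ≤ 0 := h ▸ hmr' x
        linarith [hm0 x]
      · exact div_mul_cancel₀ _ h
    set u : X → X → ℝ := fun x x' => q x * w x x' with hu_def
    have hu0 : ∀ x x', 0 ≤ u x x' := fun x x' => mul_nonneg (hq0 x) (hw0 x x')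
    have huw : ∀ x x', u x x' ≤ w x x' := fun x x' =>
      mul_le_of_le_one_left (hw0 x x') (hq1 x)
    have hurow : ∀ x, ∑ x', u x x' = m x := by
      intro x
      rw [hu_def]
      dsimp only
      rw [← Finset.mul_sum, hwr, hqr']
    set c : X → ℝ := fun x' => ∑ x, u x x' with hc_def
    have hc0 : ∀ x', 0 ≤ c x' := fun x' =>
      Finset.sum_nonneg fun x _ => hu0 x x'
    have hcs : ∀ x', c x' ≤ s x' := by
      intro x'
      rw [hc_def]
      dsimp only
      rw [← hws x']
      exact Finset.sum_le_sum fun x _ => huw x x'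
    have hsum_s : ∑ x', s x' = 1 := by
      rw [show (∑ x', s x') = ∑ x', ∑ x, w x x' from
        Finset.sum_congr rfl fun x' _ => (hws x').symm, Finset.sum_comm]
      rw [Finset.sum_congr rfl fun x (_ : x ∈ Finset.univ) => hwr x, hr'1]
    have hsum_c : ∑ x', c x' = 1 - δ := by
      rw [hc_def]
      dsimp only
      rw [Finset.sum_comm]
      rw [Finset.sum_congr rfl fun x (_ : x ∈ Finset.univ) => hurow x]
      rw [hδ_eq]; ring
    have hsc : ∑ x', (s x' - c x') = δ := by
      rw [Finset.sum_sub_distrib, hsum_s, hsum_c]; ring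
    set w' : X → X → ℝ :=
      fun x x' => u x x' + (r x - m x) * (s x' - c x') / δ with hw'_def
    have hw'0 : ∀ x x', 0 ≤ w' x x' := by
      intro x x'
      exact add_nonneg (hu0 x x') (div_nonneg
        (mul_nonneg (sub_nonneg.2 (hmr x)) (sub_nonneg.2 (hcs x'))) hδ0)
    have hrowsum : ∀ x, ∑ x', (r x - m x) * (s x' - c x') / δ = r x - m x := by
      intro x
      rw [← Finset.sum_div, ← Finset.mul_sum, hsc, mul_div_assoc,
        div_self hδz, mul_one]
    have hw'row : ∀ x, ∑ x', w' x x' = r x := by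
      intro x
      rw [hw'_def]
      dsimp only
      rw [Finset.sum_add_distrib, hurow, hrowsum]
      ring
    have hcolsum : ∀ x', ∑ x, (r x - m x) * (s x' - c x') / δ = s x' - c x' := by
      intro x'
      rw [← Finset.sum_div, ← Finset.sum_mul, ← hδ_def, mul_comm,
        mul_div_assoc, div_self hδz, mul_one]
    have hw'col : ∀ x', ∑ x, w' x x' = s x' := by
      intro x'
      rw [hw'_def]
      dsimp only
      rw [Finset.sum_add_distrib, hcolsum]
      rw [hc_def]
      dsimp only
      ring
    refine ⟨w', ⟨hw'0, hw'row, hw'col⟩, ?_⟩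
    have hexpand : ∑ x, ∑ x', d x x' ^ p * w' x x' =
        (∑ x, ∑ x', d x x' ^ p * u x x') +
        ∑ x, ∑ x', d x x' ^ p * ((r x - m x) * (s x' - c x') / δ) := by
      rw [← Finset.sum_add_distrib]
      apply Finset.sum_congr rfl
      intro x _
      rw [← Finset.sum_add_distrib]
      apply Finset.sum_congr rfl
      intro x' _
      rw [hw'_def]; ring
    have hterm1 : ∑ x, ∑ x', d x x' ^ p * u x x' ≤
        ∑ x, ∑ x', d x x' ^ p * w x x' :=
      Finset.sum_le_sum fun x _ => Finset.sum_le_sum fun x' _ =>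
        mul_le_mul_of_nonneg_left (huw x x') (hdp0 x x')
    have hterm2 : ∑ x, ∑ x', d x x' ^ p * ((r x - m x) * (s x' - c x') / δ) ≤
        D ^ p * δ := by
      have step1 : ∑ x, ∑ x', d x x' ^ p * ((r x - m x) * (s x' - c x') / δ) ≤
          ∑ x, ∑ x', D ^ p * ((r x - m x) * (s x' - c x') / δ) :=
        Finset.sum_le_sum fun x _ => Finset.sum_le_sum fun x' _ =>
          mul_le_mul_of_nonneg_right (hdD x x')
            (div_nonneg (mul_nonneg (sub_nonneg.2 (hmr x))
              (sub_nonneg.2 (hcs x'))) hδ0)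
      have step2 : ∑ x, ∑ x', D ^ p * ((r x - m x) * (s x' - c x') / δ) =
          D ^ p * δ := by
        have hinner : ∀ x : X, ∑ x', D ^ p * ((r x - m x) * (s x' - c x') / δ) =
            D ^ p * (r x - m x) := by
          intro x
          rw [← Finset.mul_sum, hrowsum]
        rw [Finset.sum_congr rfl fun x (_ : x ∈ Finset.univ) => hinner x,
          ← Finset.mul_sum, ← hδ_def]
      calc _ ≤ _ := step1
        _ = _ := step2
    have hfinal : D ^ p * δ ≤ D ^ p * ∑ x, |r x - r' x| :=
      mul_le_mul_of_nonneg_left hδle hDp0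
    linarith [hexpand, hterm1, hterm2, hfinal]

/-- One-sided Lipschitz estimate in the first marginal. -/
lemma Wpp_row_le (d : X → X → ℝ) (p D : ℝ)
    (hdp0 : ∀ x x', 0 ≤ d x x' ^ p) (hdD : ∀ x x', d x x' ^ p ≤ D ^ p)
    (hDp0 : 0 ≤ D ^ p)
    (r r' s : X → ℝ) (hr0 : ∀ x, 0 ≤ r x) (hr1 : ∑ x, r x = 1)
    (hr'0 : ∀ x, 0 ≤ r' x) (hr'1 : ∑ x, r' x = 1)
    (hs0 : ∀ x, 0 ≤ s x) (hs1 : ∑ x, s x = 1) :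
    Wpp d p r s ≤ Wpp d p r' s + D ^ p * ∑ x, |r x - r' x| := by
  have hne : ((fun w => ∑ x, ∑ x', d x x' ^ p * w x x') '' couplings r' s).Nonempty :=
    ⟨_, Set.mem_image_of_mem _ (prod_mem_couplings r' s hr'0 hs0 hr'1 hs1)⟩
  rw [show Wpp d p r' s + D ^ p * ∑ x, |r x - r' x| =
    Wpp d p r' s - (-(D ^ p * ∑ x, |r x - r' x|)) by ring, le_sub_iff_add_le]
  rw [Wpp]
  apply le_csInf hne
  rintro b ⟨w, hwmem, rfl⟩
  obtain ⟨w', hw'mem, hcost⟩ := exists_coupling_row d p D hdp0 hdD hDp0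
    r r' hr0 hr1 hr'0 hr'1 s w hwmem
  have h1 : Wpp d p r s ≤ ∑ x, ∑ x', d x x' ^ p * w' x x' :=
    csInf_le (bddBelow_costs d p hdp0 r s) (Set.mem_image_of_mem _ hw'mem)
  rw [Wpp] at h1
  dsimp only
  linarith

/-- Symmetry of `Wpp` for a symmetric cost. -/
lemma Wpp_symm (d : X → X → ℝ) (hd : ∀ x x', d x x' = d x' x) (p : ℝ)
    (r s : X → ℝ) : Wpp d p r s = Wpp d p s r := by
  have key : ∀ r s : X → ℝ,
      ((fun w => ∑ x, ∑ x', d x x' ^ p * w x x') '' couplings r s) ⊆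
      ((fun w => ∑ x, ∑ x', d x x' ^ p * w x x') '' couplings s r) := by
    intro r s y hy
    obtain ⟨w, ⟨hw0, hwr, hws⟩, rfl⟩ := hy
    refine ⟨fun x x' => w x' x, ⟨fun x x' => hw0 x' x, hws, hwr⟩, ?_⟩
    dsimp only
    rw [Finset.sum_comm]
    apply Finset.sum_congr rfl
    intro x _
    apply Finset.sum_congr rfl
    intro x' _
    rw [hd]
  unfold Wpp
  congr 1
  exact Set.Subset.antisymm (key r s) (key s r)

end Aux

/-- The map `(r,s) ↦ W_p^p(r,s)` is Lipschitz on the product of probability simplices,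
with constant `p · D^p` where `D` is the diameter of the finite metric space. -/
theorem Wpp_lipschitz {X : Type*} [Fintype X] [MetricSpace X]
    (p : ℝ) (hp : 1 ≤ p) (r s r' s' : X → ℝ)
    (hr0 : ∀ x, 0 ≤ r x) (hr1 : ∑ x, r x = 1)
    (hs0 : ∀ x, 0 ≤ s x) (hs1 : ∑ x, s x = 1)
    (hr'0 : ∀ x, 0 ≤ r' x) (hr'1 : ∑ x, r' x = 1)
    (hs'0 : ∀ x, 0 ≤ s' x) (hs'1 : ∑ x, s' x = 1)
    (D : ℝ) (hD : D = Metric.diam (Set.univ : Set X)) :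
    |Wpp (fun x x' => dist x x') p r s - Wpp (fun x x' => dist x x') p r' s'| ≤
      p * D ^ p * ((∑ x, |r x - r' x|) + ∑ x, |s x - s' x|) := by
  cases isEmpty_or_nonempty X with
  | inl h => simp at hr1
  | inr h =>
  set d : X → X → ℝ := fun x x' => dist x x' with hd_def
  have hD0 : 0 ≤ D := hD ▸ Metric.diam_nonneg
  have hp0 : 0 ≤ p := le_trans zero_le_one hp
  have hdD : ∀ x x' : X, dist x x' ≤ D := by
    intro x x'
    rw [hD]
    exact Metric.dist_le_diam_of_mem Set.finite_univ.isBounded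
      (Set.mem_univ x) (Set.mem_univ x')
  have hdp0 : ∀ x x', 0 ≤ d x x' ^ p := fun x x' =>
    Real.rpow_nonneg dist_nonneg p
  have hdpD : ∀ x x', d x x' ^ p ≤ D ^ p := fun x x' =>
    Real.rpow_le_rpow dist_nonneg (hdD x x') hp0
  have hDp0 : 0 ≤ D ^ p := Real.rpow_nonneg hD0 p
  have hdsymm : ∀ x x' : X, d x x' = d x' x := fun x x' => dist_comm x x'
  have habsr : ∑ x, |r x - r' x| = ∑ x, |r' x - r x| :=
    Finset.sum_congr rfl fun x _ => abs_sub_comm _ _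
  have habss : ∑ x, |s x - s' x| = ∑ x, |s' x - s x| :=
    Finset.sum_congr rfl fun x _ => abs_sub_comm _ _
  have habsr0 : 0 ≤ ∑ x, |r x - r' x| := Finset.sum_nonneg fun x _ => abs_nonneg _
  have habss0 : 0 ≤ ∑ x, |s x - s' x| := Finset.sum_nonneg fun x _ => abs_nonneg _
  -- forward direction
  have h1 : Wpp d p r s ≤ Wpp d p r' s + D ^ p * ∑ x, |r x - r' x| :=
    Wpp_row_le d p D hdp0 hdpD hDp0 r r' s hr0 hr1 hr'0 hr'1 hs0 hs1
  have h2 : Wpp d p r' s ≤ Wpp d p r' s' + D ^ p * ∑ x, |s x - s' x| := by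
    rw [Wpp_symm d hdsymm p r' s, Wpp_symm d hdsymm p r' s']
    exact Wpp_row_le d p D hdp0 hdpD hDp0 s s' r' hs0 hs1 hs'0 hs'1 hr'0 hr'1
  -- backward direction
  have h3 : Wpp d p r' s' ≤ Wpp d p r s' + D ^ p * ∑ x, |r x - r' x| := by
    rw [habsr]
    exact Wpp_row_le d p D hdp0 hdpD hDp0 r' r s' hr'0 hr'1 hr0 hr1 hs'0 hs'1
  have h4 : Wpp d p r s' ≤ Wpp d p r s + D ^ p * ∑ x, |s x - s' x| := by
    rw [habss, Wpp_symm d hdsymm p r s', Wpp_symm d hdsymm p r s]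
    exact Wpp_row_le d p D hdp0 hdpD hDp0 s' s r hs'0 hs'1 hs0 hs1 hr0 hr1
  rw [abs_le]
  constructor
  · nlinarith [mul_nonneg hDp0 (add_nonneg habsr0 habss0)]
  · nlinarith [mul_nonneg hDp0 (add_nonneg habsr0 habss0)]
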